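/- arXiv:1003.0275 — 3 statements merged into one kernel-verified Lean document; each statement's English description precedes it below -/
import Mathlib

section
/- For the tempered stable density ν(x) = (2^γ γ/Γ(1-γ)) x^{-(γ+1)} e^{-x/2} 1_{x>0} with γ ∈ (0,1), the Fourier transform of x²ν(x) satisfies F[x²ν](u) ~ 2^γ γ(1-γ) e^{iπ(1-γ/2)} u^{-2+γ} as u → +∞. In particular, ∫ (1+|u|^β)|F[x²ν](u)| du = ∞ whenever β > 1-γ. -/
open MeasureTheory Real Filter Set Topology

section Aux

lemma aux_int_real {t c : ℝ} (ht : 0 < t) (hc : 0 < c) :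
    IntegrableOn (fun x : ℝ => x ^ (t - 1) * Real.exp (-(c * x))) (Ioi 0) := by
  have h := Real.GammaIntegral_convergent ht
  rw [← mul_zero c, ← integrableOn_Ioi_comp_mul_left_iff _ _ hc] at h
  refine (IntegrableOn.congr_fun (h.const_mul (c ^ (t - 1))⁻¹)
    (fun x (hx : 0 < x) => ?_) measurableSet_Ioi)
  rw [Real.mul_rpow hc.le hx.le]
  field_simp [(Real.rpow_pos_of_pos hc (t-1)).ne']

lemma aux_norm {t : ℝ} {b : ℂ} (x : ℝ) (hx : 0 < x) :
    ‖((x ^ (t - 1) : ℝ) : ℂ) * Complex.exp (-b * x)‖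
      = x ^ (t - 1) * Real.exp (-(b.re * x)) := by
  rw [norm_mul, Complex.norm_real, Real.norm_eq_abs,
    abs_of_nonneg (Real.rpow_nonneg hx.le _), Complex.norm_exp]
  congr 2
  simp [Complex.mul_re]

lemma aux_meas {t : ℝ} (b : ℂ) :
    AEStronglyMeasurable (fun x : ℝ => ((x ^ (t - 1) : ℝ) : ℂ) * Complex.exp (-b * x))
      (volume.restrict (Ioi 0)) := by
  have h1 : ContinuousOn (fun x : ℝ => ((x ^ (t - 1) : ℝ) : ℂ)) (Ioi 0) := fun x hx =>
    (Complex.continuous_ofReal.continuousAt.comp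
      (Real.continuousAt_rpow_const x _ (Or.inl (ne_of_gt hx)))).continuousWithinAt
  exact (h1.aestronglyMeasurable measurableSet_Ioi).mul
    (Complex.continuous_exp.comp (by continuity)).aestronglyMeasurable

lemma aux_int_c {t : ℝ} (ht : 0 < t) {b : ℂ} (hb : 0 < b.re) :
    IntegrableOn (fun x : ℝ => ((x ^ (t - 1) : ℝ) : ℂ) * Complex.exp (-b * x)) (Ioi 0) := by
  refine Integrable.mono' (aux_int_real ht hb) (aux_meas b) ?_
  filter_upwards [ae_restrict_mem measurableSet_Ioi] with x hx
  rw [aux_norm x hx]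

lemma aux_diff {t : ℝ} (ht : 0 < t) {b₀ : ℂ} (hb : 0 < b₀.re) :
    DifferentiableAt ℂ
      (fun b : ℂ => ∫ x : ℝ in Ioi 0, ((x ^ (t - 1) : ℝ) : ℂ) * Complex.exp (-b * x)) b₀ := by
  set r := b₀.re
  have hr2 : 0 < r / 2 := by positivity
  have key := hasDerivAt_integral_of_dominated_loc_of_deriv_le (μ := volume.restrict (Ioi 0))
    (F := fun (b : ℂ) (x : ℝ) => ((x ^ (t - 1) : ℝ) : ℂ) * Complex.exp (-b * x))
    (F' := fun (b : ℂ) (x : ℝ) => ((x ^ (t - 1) : ℝ) : ℂ) * (-x * Complex.exp (-b * x)))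
    (x₀ := b₀)
    (bound := fun x : ℝ => x ^ ((t + 1) - 1) * Real.exp (-(r / 2 * x)))
    (Metric.ball_mem_nhds b₀ hr2) ?_ ?_ ?_ ?_ ?_ ?_
  · exact key.2.differentiableAt
  · exact Eventually.of_forall fun b => aux_meas b
  · exact aux_int_c ht hb
  · have h1 : ContinuousOn (fun x : ℝ => ((x ^ (t - 1) : ℝ) : ℂ) * (-x * Complex.exp (-b₀ * x)))
        (Ioi 0) := by
      refine ContinuousOn.mul (fun x hx => ?_) (by fun_prop)
      exact (Complex.continuous_ofReal.continuousAt.comp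
        (Real.continuousAt_rpow_const x _ (Or.inl (ne_of_gt hx)))).continuousWithinAt
    exact h1.aestronglyMeasurable measurableSet_Ioi
  · filter_upwards [ae_restrict_mem measurableSet_Ioi] with x hx b hball
    have hxpos : (0:ℝ) < x := hx
    have hre : r / 2 ≤ b.re := by
      have h0 : |(b - b₀).re| ≤ ‖b - b₀‖ := Complex.abs_re_le_norm _
      have h1 : ‖b - b₀‖ < r / 2 := by
        rw [Metric.mem_ball, Complex.dist_eq] at hball; exact hball
      have h2 : |b.re - r| < r / 2 := by
        have he : (b - b₀).re = b.re - r := by simp [r, Complex.sub_re]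
        rw [← he]; exact lt_of_le_of_lt h0 h1
      linarith [abs_lt.mp h2]
    have hn : ‖((x ^ (t - 1) : ℝ) : ℂ) * (-x * Complex.exp (-b * x))‖
        = x ^ (t - 1) * (x * Real.exp (-(b.re * x))) := by
      rw [norm_mul, norm_mul, Complex.norm_real, Real.norm_eq_abs,
        abs_of_nonneg (Real.rpow_nonneg hxpos.le _), norm_neg, Complex.norm_real,
        Real.norm_eq_abs, abs_of_nonneg hxpos.le, Complex.norm_exp]
      congr 3
      simp [Complex.mul_re]
    rw [hn]
    have hx1 : x ^ (t - 1) * (x * Real.exp (-(b.re * x)))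
        = x ^ ((t + 1) - 1) * Real.exp (-(b.re * x)) := by
      rw [show (t + 1) - 1 = (t - 1) + 1 by ring, Real.rpow_add hxpos, Real.rpow_one]
      ring
    rw [hx1]
    have hexp : Real.exp (-(b.re * x)) ≤ Real.exp (-(r / 2 * x)) := by
      apply Real.exp_le_exp.mpr; nlinarith
    have h2 : (0:ℝ) ≤ x ^ ((t+1)-1) := Real.rpow_nonneg hxpos.le _
    nlinarith
  · exact aux_int_real (by linarith) hr2
  · filter_upwards [ae_restrict_mem measurableSet_Ioi] with x hx b _
    have h3 : HasDerivAt (fun b : ℂ => Complex.exp (-b * x)) (-x * Complex.exp (-b * x)) b := by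
      have h := (((hasDerivAt_id b).neg.mul_const (x:ℂ))).cexp
      simpa [mul_comm] using h
    simpa [mul_comm, mul_left_comm, mul_assoc] using h3.const_mul ((x ^ (t - 1) : ℝ) : ℂ)

lemma aux_real_eval {a : ℝ} (ha : 0 < a) {r : ℝ} (hr : 0 < r) :
    ∫ x : ℝ in Ioi 0, ((x ^ (a - 1) : ℝ) : ℂ) * Complex.exp (-(r:ℂ) * x)
      = Complex.Gamma a * (r:ℂ) ^ (-(a:ℂ)) := by
  have key := Complex.integral_cpow_mul_exp_neg_mul_Ioi
    (a := (a:ℂ)) (r := r) (by simpa using ha) hr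
  have h1 : ∀ x ∈ Ioi (0:ℝ), (x:ℂ) ^ ((a:ℂ) - 1) * Complex.exp (-(r * x))
      = ((x ^ (a - 1) : ℝ) : ℂ) * Complex.exp (-(r:ℂ) * x) := by
    intro x hx
    rw [Complex.ofReal_cpow (le_of_lt hx)]
    push_cast
    ring_nf
  rw [setIntegral_congr_fun measurableSet_Ioi h1] at key
  rw [key]
  have h2 : ((1:ℂ) / r) ^ (a:ℂ) = (r:ℂ) ^ (-(a:ℂ)) := by
    rw [show ((1:ℂ)/r) = (((1/r : ℝ)):ℂ) by push_cast; ring,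
      ← Complex.ofReal_cpow (by positivity) a,
      show (-(a:ℂ)) = ((-a : ℝ):ℂ) by push_cast; ring,
      ← Complex.ofReal_cpow hr.le (-a)]
    norm_cast
    rw [one_div, Real.inv_rpow hr.le, Real.rpow_neg hr.le]
  rw [h2]; ring

lemma aux_key {a : ℝ} (ha : 0 < a) {b : ℂ} (hb : 0 < b.re) :
    ∫ x : ℝ in Ioi 0, ((x ^ (a - 1) : ℝ) : ℂ) * Complex.exp (-b * x)
      = Complex.Gamma a * b ^ (-(a:ℂ)) := by
  set U : Set ℂ := {z : ℂ | 0 < z.re} with hU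
  have hUo : IsOpen U := isOpen_lt continuous_const Complex.continuous_re
  set g : ℂ → ℂ := fun b => ∫ x : ℝ in Ioi 0, ((x ^ (a - 1) : ℝ) : ℂ) * Complex.exp (-b * x)
  set h : ℂ → ℂ := fun b => Complex.Gamma a * b ^ (-(a:ℂ))
  suffices hEq : EqOn g h U from hEq hb
  have hg : AnalyticOnNhd ℂ g U := by
    apply DifferentiableOn.analyticOnNhd _ hUo
    exact fun z hz => (aux_diff ha hz).differentiableWithinAt
  have hh : AnalyticOnNhd ℂ h U := by
    apply DifferentiableOn.analyticOnNhd _ hUo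
    intro z hz
    refine DifferentiableAt.differentiableWithinAt ?_
    exact ((differentiableAt_id.cpow (differentiableAt_const _) (Or.inl hz)).const_mul _)
  refine hg.eqOn_of_preconnected_of_frequently_eq hh
    ((convex_halfSpace_re_gt 0).isPreconnected) (z₀ := 1) (by simp [hU]) ?_
  have hseq : Tendsto (fun n : ℕ => ((1 + ((n:ℝ)+1)⁻¹ : ℝ) : ℂ)) atTop (𝓝[≠] 1) := by
    refine tendsto_nhdsWithin_of_tendsto_nhds_of_eventually_within _ ?_ ?_
    · have h5 : Tendsto (fun n : ℕ => (1 + ((n:ℝ)+1)⁻¹ : ℝ)) atTop (𝓝 1) := by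
        have h0 : Tendsto (fun n : ℕ => (((n:ℝ)+1))⁻¹) atTop (𝓝 0) :=
          tendsto_inv_atTop_zero.comp (tendsto_atTop_add_const_right _ _ tendsto_natCast_atTop_atTop)
        simpa using tendsto_const_nhds.add h0
      have h6 := (Complex.continuous_ofReal.tendsto 1).comp h5
      exact h6
    · filter_upwards with n
      simp only [mem_compl_iff, mem_singleton_iff]
      intro hcontra
      have h7 : (1 + ((n:ℝ)+1)⁻¹ : ℝ) = 1 := by exact_mod_cast hcontra
      have hpos : (0:ℝ) < ((n:ℝ)+1)⁻¹ := by positivity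
      linarith
  refine hseq.frequently (Eventually.of_forall fun n => ?_).frequently
  have hr : (0:ℝ) < 1 + ((n:ℝ)+1)⁻¹ := by positivity
  exact aux_real_eval ha hr

lemma aux_ratio (γ : ℝ) {u : ℝ} (hu : 0 < u) :
    ((1/2 : ℂ) - Complex.I * u) ^ ((γ:ℂ) - 2)
      / (Complex.exp (Complex.I * (Real.pi:ℂ) * (1 - γ/2)) * ((u ^ (γ - 2) : ℝ) : ℂ))
    = (1 + Complex.I / (2 * u)) ^ ((γ:ℂ) - 2) := by
  have hu' : (u:ℂ) ≠ 0 := Complex.ofReal_ne_zero.mpr hu.ne'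
  set s : ℂ := (γ:ℂ) - 2 with hs
  set M : ℂ := (u:ℂ) * (-Complex.I) with hM
  set w : ℂ := 1 + Complex.I / (2 * u) with hw
  have hMne : M ≠ 0 := mul_ne_zero hu' (by simp [Complex.I_ne_zero])
  have hwre : w.re = 1 := by
    rw [hw]
    simp [Complex.div_re, Complex.add_re]
  have hwne : w ≠ 0 := by
    intro h
    rw [h] at hwre
    simp at hwre
  have hden : Complex.exp (Complex.I * (Real.pi:ℂ) * (1 - γ/2)) * ((u ^ (γ - 2) : ℝ) : ℂ)
      = M ^ s := by
    rw [Complex.cpow_def_of_ne_zero hMne, hM, Complex.log_ofReal_mul hu (by simp [Complex.I_ne_zero]),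
      Complex.log_neg_I]
    rw [Complex.ofReal_cpow hu.le, Complex.cpow_def_of_ne_zero hu',
      ← Complex.ofReal_log hu.le, ← Complex.exp_add]
    congr 1
    rw [hs]
    push_cast
    ring
  have hB : ((1/2 : ℂ) - Complex.I * u) = M * w := by
    rw [hM, hw]
    field_simp
    linear_combination Complex.I_sq
  have hlog : Complex.log (M * w) = Complex.log M + Complex.log w := by
    rw [Complex.log_mul_eq_add_log_iff hMne hwne]
    have hargM : M.arg = -(Real.pi/2) := by
      rw [hM, mul_comm]
      rw [show (-Complex.I) * (u:ℂ) = (u:ℂ) * (-Complex.I) by ring,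
        Complex.arg_real_mul _ hu, Complex.arg_neg_I]
    have hargw : |w.arg| < Real.pi / 2 :=
      Complex.abs_arg_lt_pi_div_two_iff.mpr (Or.inl (by rw [hwre]; norm_num))
    have h8 := abs_lt.mp hargw
    constructor <;> rw [hargM] <;> [linarith; linarith [Real.pi_pos]]
  have hsplit : (M * w) ^ s = M ^ s * w ^ s := by
    rw [Complex.cpow_def_of_ne_zero (mul_ne_zero hMne hwne),
      Complex.cpow_def_of_ne_zero hMne, Complex.cpow_def_of_ne_zero hwne,
      hlog, add_mul, Complex.exp_add]
  have hMs : M ^ s ≠ 0 := by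
    rw [Complex.cpow_def_of_ne_zero hMne]
    exact Complex.exp_ne_zero _
  rw [hden, hB, hsplit]
  field_simp

lemma aux_F_formula (γ : ℝ) (hγ0 : 0 < γ) (hγ1 : γ < 1)
    (ν : ℝ → ℝ)
    (hν : ∀ x : ℝ, ν x = if 0 < x then
      ((2 : ℝ) ^ γ * γ / Real.Gamma (1 - γ)) * x ^ (-(γ + 1)) * Real.exp (-x / 2) else 0)
    (F : ℝ → ℂ)
    (hF : ∀ u : ℝ, F u = ∫ x : ℝ, Complex.exp (Complex.I * u * x) * ((x ^ 2 * ν x : ℝ) : ℂ))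
    (u : ℝ) :
    F u = (((2 : ℝ) ^ γ * γ * (1 - γ) : ℝ) : ℂ)
      * ((1/2 : ℂ) - Complex.I * u) ^ ((γ:ℂ) - 2) := by
  have hG : (0:ℝ) < Real.Gamma (1 - γ) := Real.Gamma_pos_of_pos (by linarith)
  set C : ℝ := (2 : ℝ) ^ γ * γ / Real.Gamma (1 - γ) with hC
  rw [hF u]
  have hzero : ∀ x : ℝ, x ∉ Ioi (0:ℝ) →
      Complex.exp (Complex.I * u * x) * ((x ^ 2 * ν x : ℝ) : ℂ) = 0 := by
    intro x hx
    rw [hν x, if_neg (by simpa using hx)]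
    simp
  rw [← setIntegral_eq_integral_of_forall_compl_eq_zero hzero]
  have hcong : ∀ x ∈ Ioi (0:ℝ), Complex.exp (Complex.I * u * x) * ((x ^ 2 * ν x : ℝ) : ℂ)
      = (C:ℂ) * (((x ^ ((2 - γ) - 1) : ℝ) : ℂ)
          * Complex.exp (-((1/2 : ℂ) - Complex.I * u) * x)) := by
    intro x hx
    have hx' : (0:ℝ) < x := hx
    rw [hν x, if_pos hx']
    have hreal : x ^ 2 * (C * x ^ (-(γ + 1)) * Real.exp (-x / 2))
        = C * (x ^ ((2 - γ) - 1) * Real.exp (-x / 2)) := by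
      rw [show ((2 - γ) - 1 : ℝ) = 2 + (-(γ + 1)) by ring, Real.rpow_add hx',
        Real.rpow_two, ← Real.rpow_natCast x 2]
      push_cast
      ring
    rw [hreal]
    have hexp : ((Real.exp (-x / 2) : ℝ) : ℂ) * Complex.exp (Complex.I * u * x)
        = Complex.exp (-((1/2 : ℂ) - Complex.I * u) * x) := by
      rw [Complex.ofReal_exp, ← Complex.exp_add]
      congr 1
      push_cast
      ring
    rw [Complex.ofReal_mul, Complex.ofReal_mul, ← hexp]
    ring
  rw [setIntegral_congr_fun measurableSet_Ioi hcong, integral_const_mul]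
  have hb : (0:ℝ) < ((1/2 : ℂ) - Complex.I * u).re := by simp
  rw [aux_key (show (0:ℝ) < 2 - γ by linarith) hb]
  rw [show (-(((2 - γ):ℝ):ℂ)) = (γ:ℂ) - 2 by push_cast; ring]
  rw [Complex.Gamma_ofReal]
  have hGam : Real.Gamma (2 - γ) = (1 - γ) * Real.Gamma (1 - γ) := by
    rw [show (2 - γ : ℝ) = (1 - γ) + 1 by ring, Real.Gamma_add_one (by linarith)]
  rw [hGam]
  rw [show ((C:ℂ) * ((((1 - γ) * Real.Gamma (1 - γ) : ℝ):ℂ)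
      * ((1/2 : ℂ) - Complex.I * u) ^ ((γ:ℂ) - 2)))
    = ((C * ((1 - γ) * Real.Gamma (1 - γ)) : ℝ) : ℂ)
      * ((1/2 : ℂ) - Complex.I * u) ^ ((γ:ℂ) - 2) by push_cast; ring]
  congr 2
  rw [hC]
  field_simp

end Aux

/-- For the tempered stable density
`ν(x) = (2^γ γ/Γ(1-γ)) x^{-(γ+1)} e^{-x/2} 1_{x>0}` with `γ ∈ (0,1)`, the Fourier transform of
`x²ν(x)` satisfies `F[x²ν](u) ~ 2^γ γ(1-γ) e^{iπ(1-γ/2)} u^{-2+γ}` as `u → +∞`. In particular,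
`∫ (1+|u|^β)|F[x²ν](u)| du = ∞` whenever `β > 1-γ`. -/
theorem tempered_stable_fourier_asymptotics
    (γ : ℝ) (hγ0 : 0 < γ) (hγ1 : γ < 1)
    (ν : ℝ → ℝ)
    (hν : ∀ x : ℝ, ν x = if 0 < x then
      ((2 : ℝ) ^ γ * γ / Real.Gamma (1 - γ)) * x ^ (-(γ + 1)) * Real.exp (-x / 2) else 0)
    (F : ℝ → ℂ)
    (hF : ∀ u : ℝ, F u = ∫ x : ℝ, Complex.exp (Complex.I * u * x) * ((x ^ 2 * ν x : ℝ) : ℂ)) :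
    Tendsto (fun u : ℝ =>
        F u / (((2 : ℝ) ^ γ * γ * (1 - γ) : ℝ) *
          Complex.exp (Complex.I * (Real.pi : ℂ) * (1 - γ / 2)) * ((u ^ (γ - 2) : ℝ) : ℂ)))
      atTop (nhds 1) ∧
    ∀ β : ℝ, 1 - γ < β → ¬ Integrable (fun u : ℝ => (1 + |u| ^ β) * ‖F u‖) := by
  have hFor := aux_F_formula γ hγ0 hγ1 ν hν F hF
  set K : ℝ := (2 : ℝ) ^ γ * γ * (1 - γ) with hKdef
  have hK : (0:ℝ) < K := by
    have : (0:ℝ) < (2:ℝ) ^ γ := Real.rpow_pos_of_pos (by norm_num) _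
    have h2 : (0:ℝ) < 1 - γ := by linarith
    positivity
  have hKc : (K:ℂ) ≠ 0 := Complex.ofReal_ne_zero.mpr hK.ne'
  constructor
  · -- the limit
    have hlim : Tendsto (fun u : ℝ => (1 + Complex.I / (2 * u)) ^ ((γ:ℂ) - 2)) atTop (𝓝 1) := by
      have hw : Tendsto (fun u : ℝ => 1 + Complex.I / (2 * (u:ℂ))) atTop (𝓝 1) := by
        have h0 : Tendsto (fun u : ℝ => ((u:ℂ))⁻¹) atTop (𝓝 0) := by
          have h0' : Tendsto (fun u : ℝ => ((u⁻¹:ℝ):ℂ)) atTop (𝓝 (((0:ℝ):ℂ))) :=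
            (Complex.continuous_ofReal.tendsto 0).comp tendsto_inv_atTop_zero
          simpa using h0'
        have h1 : Tendsto (fun u : ℝ => 1 + (Complex.I / 2) * ((u:ℂ))⁻¹) atTop
            (𝓝 (1 + (Complex.I / 2) * 0)) :=
          tendsto_const_nhds.add (tendsto_const_nhds.mul h0)
        simp only [mul_zero, add_zero] at h1
        refine h1.congr' ?_
        filter_upwards [eventually_gt_atTop (0:ℝ)] with u hu
        have : (u:ℂ) ≠ 0 := Complex.ofReal_ne_zero.mpr hu.ne'
        field_simp
      have hc : ContinuousAt (fun z : ℂ => z ^ ((γ:ℂ) - 2)) 1 :=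
        continuousAt_cpow_const (by simp [Complex.mem_slitPlane_iff])
      have := hc.tendsto.comp hw
      rw [Complex.one_cpow] at this
      exact this
    refine Tendsto.congr' ?_ hlim
    filter_upwards [eventually_gt_atTop (0:ℝ)] with u hu
    rw [hFor u, ← aux_ratio γ hu]
    have hE : Complex.exp (Complex.I * (Real.pi:ℂ) * (1 - (γ:ℂ)/2)) ≠ 0 := Complex.exp_ne_zero _
    have hY : ((u ^ (γ-2) : ℝ) : ℂ) ≠ 0 :=
      Complex.ofReal_ne_zero.mpr (Real.rpow_pos_of_pos hu _).ne'
    field_simp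
  · -- non-integrability
    intro β hβ h
    have hnorm : ∀ u : ℝ, ‖F u‖ = K * (‖(1/2:ℂ) - Complex.I * u‖) ^ (γ - 2) := by
      intro u
      have hBne : ((1/2:ℂ) - Complex.I * (u:ℂ)) ≠ 0 := by
        intro hc
        have := congrArg Complex.re hc
        simp at this
      rw [hFor u, norm_mul, Complex.norm_real, Real.norm_eq_abs, abs_of_pos hK,
        Complex.norm_cpow_of_ne_zero hBne]
      simp
    have hc2 : (0:ℝ) < K * 2 ^ (γ-2) := by
      have : (0:ℝ) < (2:ℝ) ^ (γ-2) := Real.rpow_pos_of_pos (by norm_num) _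
      positivity
    have hmono : IntegrableOn (fun u : ℝ => (K * 2 ^ (γ-2)) * u ^ (β + (γ-2))) (Ioi 1) := by
      refine Integrable.mono' h.integrableOn ?_ ?_
      · refine (ContinuousOn.aestronglyMeasurable ?_ measurableSet_Ioi)
        refine continuousOn_const.mul (fun u hu => ?_)
        exact (Real.continuousAt_rpow_const u _
          (Or.inl (ne_of_gt (lt_trans zero_lt_one hu)))).continuousWithinAt
      · filter_upwards [ae_restrict_mem measurableSet_Ioi] with u hu
        have hu1 : (1:ℝ) < u := hu
        have hu0 : (0:ℝ) < u := lt_trans zero_lt_one hu1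
        have hBne : ((1/2:ℂ) - Complex.I * (u:ℂ)) ≠ 0 := by
          intro hc
          have := congrArg Complex.re hc
          simp at this
        have habs_le : ‖(1/2:ℂ) - Complex.I * u‖ ≤ 2 * u := by
          have h3 : ‖(1/2:ℂ) - Complex.I * u‖
              ≤ ‖(1/2 : ℂ)‖ + ‖Complex.I * (u:ℂ)‖ := by
            exact norm_sub_le _ _
          have h4 : ‖(1/2 : ℂ)‖ = 1/2 := by norm_num
          have h5 : ‖Complex.I * (u:ℂ)‖ = u := by
            simp [abs_of_pos hu0]
          rw [h4, h5] at h3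
          linarith
        have h1 : (2*u) ^ (γ-2) ≤ (‖(1/2:ℂ) - Complex.I * u‖) ^ (γ-2) :=
          Real.rpow_le_rpow_of_nonpos (norm_pos_iff.mpr hBne) habs_le (by linarith)
        have h2 : (2*u) ^ (γ-2) = 2 ^ (γ-2) * u ^ (γ-2) := Real.mul_rpow (by norm_num) hu0.le
        rw [Real.norm_eq_abs, abs_of_nonneg (by positivity)]
        have e1 : |u| = u := abs_of_pos hu0
        calc (K * 2 ^ (γ-2)) * u ^ (β + (γ-2))
            = u ^ β * (K * (2 ^ (γ-2) * u ^ (γ-2))) := by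
              rw [Real.rpow_add hu0]; ring
          _ ≤ u ^ β * (K * (‖(1/2:ℂ) - Complex.I * u‖) ^ (γ-2)) := by
              rw [← h2]
              have hub : (0:ℝ) ≤ u ^ β := Real.rpow_nonneg hu0.le _
              exact mul_le_mul_of_nonneg_left (mul_le_mul_of_nonneg_left h1 hK.le) hub
          _ = |u| ^ β * ‖F u‖ := by rw [hnorm u, e1]
          _ ≤ (1 + |u| ^ β) * ‖F u‖ := by
              have h6 := norm_nonneg (F u)
              nlinarith [Real.rpow_nonneg (abs_nonneg u) β]
    have hIntp : IntegrableOn (fun u : ℝ => u ^ (β + (γ-2))) (Ioi 1) := by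
      have h7 := hmono.const_mul (K * 2 ^ (γ-2))⁻¹
      refine IntegrableOn.congr_fun h7 (fun u _ => ?_) measurableSet_Ioi
      field_simp
    rw [integrableOn_Ioi_rpow_iff zero_lt_one] at hIntp
    linarith
end

section
/- Let ψ̃ be the characteristic exponent of a Lévy process such that exp(ψ̃(u)) is a characteristic function of an infinitely divisible distribution, and set ψ(u) = log(1/(1-ψ̃(u))) (compound exponential). If L̃_Δ is any completely monotone function with L̃_Δ(0)=1 and we define L_Δ(z) = L̃_Δ(e^z - 1), then L_Δ(-ψ(u)) = L̃_Δ(-ψ̃(u)) for all u ∈ ℝ. -/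
/-- Let `ψ̃` be the characteristic exponent of a Lévy process such that
`exp(ψ̃(u))` is the characteristic function of an infinitely divisible distribution, with
`Re ψ̃ ≤ 0` and `|ψ̃(u)| < 1`, and set `ψ(u) = log(1/(1-ψ̃(u)))` (compound exponential). If
`L̃Δ` is any completely monotone function with `L̃Δ(0)=1` and we define `LΔ(z) = L̃Δ(e^z - 1)`,
then `LΔ(-ψ(u)) = L̃Δ(-ψ̃(u))` for all `u ∈ ℝ`. -/
theorem compound_exponential_nonidentifiability
    (ψt : ℝ → ℂ)
    (hre : ∀ u, (ψt u).re ≤ 0) (habs : ∀ u, ‖ψt u‖ < 1)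
    (Lt : ℂ → ℂ)
    -- complete monotonicity of `L̃Δ` (on the nonnegative half-line)
    (hcm : ∀ (n : ℕ) (x : ℝ), 0 ≤ x →
      0 ≤ (-1 : ℝ) ^ n * iteratedDeriv n (fun t : ℝ => (Lt (t : ℂ)).re) x)
    (hL0 : Lt 0 = 1)
    (ψ : ℝ → ℂ) (hψ : ∀ u, ψ u = Complex.log (1 / (1 - ψt u)))
    (LΔ : ℂ → ℂ) (hLΔ : ∀ z : ℂ, LΔ z = Lt (Complex.exp z - 1)) :
    ∀ u : ℝ, LΔ (-ψ u) = Lt (-ψt u) := by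
  intro u
  have hne : (1 : ℂ) - ψt u ≠ 0 := by
    intro h
    have : ‖ψt u‖ = 1 := by
      have : ψt u = 1 := by linear_combination -h
      simp [this]
    linarith [habs u]
  rw [hLΔ, hψ, Complex.exp_neg, Complex.exp_log (by simpa using inv_ne_zero hne)]
  congr 1
  field_simp
  ring
end

section
/- Let f̄: ℝ → ℝ be bounded by C, m times differentiable on (x₀ - δ, x₀ + δ) with derivatives bounded by D, and let K: ℝ → ℝ satisfy ∫K = 1, ∫z^k K(z)dz = 0 for 1 ≤ k ≤ m, and ∫|z|^m |K(z)| dz < ∞. Then for all h ∈ (0, δ], |∫_ℝ f̄(x₀ + hv) K(v) dv − f̄(x₀)| ≤ C' h^s for every 1 ≤ s ≤ m, with a constant C' depending only on C, D, δ, s and ∫|z|^m|K(z)|dz. -/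
open MeasureTheory Set

lemma myIteratedDerivWithin_of_isOpen {f : ℝ → ℝ} {s : Set ℝ} (n : ℕ) (hs : IsOpen s)
    {x : ℝ} (hx : x ∈ s) : iteratedDerivWithin n f s x = iteratedDeriv n f x := by
  simp only [iteratedDerivWithin, iteratedDeriv, iteratedFDerivWithin_of_isOpen n hs hx]

lemma myIteratedDerivWithin_Icc_eq {f : ℝ → ℝ} {s : Set ℝ} (hs : IsOpen s) {m : ℕ}
    (hf : ContDiffOn ℝ m f s) {a b : ℝ} (hab : a < b) (hsub : Icc a b ⊆ s)
    {k : ℕ} (hk : k ≤ m) {y : ℝ} (hy : y ∈ Icc a b) :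
    iteratedDerivWithin k f (Icc a b) y = iteratedDeriv k f y := by
  have H := hf.ftaylorSeriesWithin hs.uniqueDiffOn
  have H2 := (H.mono hsub).eq_iteratedFDerivWithin_of_uniqueDiffOn
    (by exact_mod_cast hk) (uniqueDiffOn_Icc hab) hy
  have H3 : ftaylorSeriesWithin ℝ f s y k = iteratedFDerivWithin ℝ k f s y := rfl
  have H4 : iteratedFDerivWithin ℝ k f s y = iteratedFDeriv ℝ k f y :=
    iteratedFDerivWithin_of_isOpen k hs (hsub hy)
  simp only [iteratedDerivWithin, iteratedDeriv, ← H2, H3, H4]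

lemma myTaylor_right {f : ℝ → ℝ} {x₀ δ D : ℝ} (hδ : 0 < δ) (hD : 0 ≤ D) {n : ℕ}
    (hf : ContDiffOn ℝ (n + 1) f (Ioo (x₀ - δ) (x₀ + δ)))
    (hd : ∀ y ∈ Ioo (x₀ - δ) (x₀ + δ), |iteratedDeriv (n + 1) f y| ≤ D)
    {x : ℝ} (hx : x ∈ Ioo (x₀ - δ) (x₀ + δ)) (hx0 : x₀ < x) :
    |f x - ∑ k ∈ Finset.range (n + 1), iteratedDeriv k f x₀ * (x - x₀) ^ k / (k.factorial : ℝ)|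
      ≤ D * |x - x₀| ^ (n + 1) := by
  have hIcc : Icc x₀ x ⊆ Ioo (x₀ - δ) (x₀ + δ) := by
    apply Icc_subset_Ioo _ hx.2
    linarith
  have hf' : ContDiffOn ℝ ((n + 1 : ℕ) : ℕ∞) f (Ioo (x₀ - δ) (x₀ + δ)) := by
    exact_mod_cast hf
  have hC : ∀ y ∈ Icc x₀ x, ‖iteratedDerivWithin (n + 1) f (Icc x₀ x) y‖ ≤ D := by
    intro y hy
    rw [Real.norm_eq_abs,
      myIteratedDerivWithin_Icc_eq isOpen_Ioo hf' hx0 hIcc le_rfl hy]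
    exact hd y (hIcc hy)
  have h1 := taylor_mean_remainder_bound hx0.le (hf.mono hIcc) ⟨hx0.le, le_refl x⟩ hC
  have h2 : taylorWithinEval f n (Icc x₀ x) x₀ x
      = ∑ k ∈ Finset.range (n + 1), iteratedDeriv k f x₀ * (x - x₀) ^ k / (k.factorial : ℝ) := by
    rw [taylor_within_apply]
    refine Finset.sum_congr rfl fun k hk => ?_
    rw [myIteratedDerivWithin_Icc_eq isOpen_Ioo hf' hx0 hIcc
      ((Nat.le_of_lt_succ (Finset.mem_range.mp hk)).trans (Nat.le_succ n))
      (left_mem_Icc.mpr hx0.le), smul_eq_mul]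
    ring
  rw [h2, Real.norm_eq_abs] at h1
  refine h1.trans ?_
  rw [abs_of_nonneg (by linarith : (0:ℝ) ≤ x - x₀)]
  rw [div_le_iff₀ (by positivity)]
  have h3 : (1:ℝ) ≤ (n.factorial : ℝ) := by exact_mod_cast n.factorial_pos
  nlinarith [pow_nonneg (by linarith : (0:ℝ) ≤ x - x₀) (n+1), mul_nonneg hD (pow_nonneg (by linarith : (0:ℝ) ≤ x - x₀) (n+1))]

lemma myTaylor_two_sided {f : ℝ → ℝ} {x₀ δ D : ℝ} (hδ : 0 < δ) (hD : 0 ≤ D) {n : ℕ}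
    (hf : ContDiffOn ℝ (n + 1) f (Ioo (x₀ - δ) (x₀ + δ)))
    (hd : ∀ y ∈ Ioo (x₀ - δ) (x₀ + δ), |iteratedDeriv (n + 1) f y| ≤ D)
    {x : ℝ} (hx : x ∈ Ioo (x₀ - δ) (x₀ + δ)) :
    |f x - ∑ k ∈ Finset.range (n + 1), iteratedDeriv k f x₀ * (x - x₀) ^ k / (k.factorial : ℝ)|
      ≤ D * |x - x₀| ^ (n + 1) := by
  rcases lt_trichotomy x₀ x with hlt | heq | hgt
  · exact myTaylor_right hδ hD hf hd hx hlt
  · subst heq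
    have hsum : ∑ k ∈ Finset.range (n + 1),
        iteratedDeriv k f x₀ * (x₀ - x₀) ^ k / (k.factorial : ℝ) = f x₀ := by
      rw [Finset.sum_eq_single 0]
      · simp
      · intro k _ hk
        simp [zero_pow hk]
      · simp
    rw [hsum]
    simp [mul_nonneg hD (pow_nonneg (abs_nonneg _) _)]
  · -- reflection
    set g : ℝ → ℝ := fun t => f (2 * x₀ - t) with hg_def
    have hmap : ∀ t ∈ Ioo (x₀ - δ) (x₀ + δ), 2 * x₀ - t ∈ Ioo (x₀ - δ) (x₀ + δ) := by
      rintro t ⟨h1, h2⟩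
      constructor <;> [skip; skip] <;> simp only [mem_Ioo] at * <;> linarith
    have hgC : ContDiffOn ℝ (n + 1) g (Ioo (x₀ - δ) (x₀ + δ)) := by
      apply hf.comp ((contDiff_const.sub contDiff_id).contDiffOn)
      intro t ht
      exact hmap t ht
    have key : ∀ (k : ℕ) (t : ℝ), iteratedDeriv k g t
        = (-1 : ℝ) ^ k * iteratedDeriv k f (2 * x₀ - t) := by
      intro k t
      have e1 : g = fun y => (fun z => f (2 * x₀ + z)) (-y) := by
        funext y; simp [hg_def, sub_eq_add_neg]
      calc iteratedDeriv k g t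
          = (-1 : ℝ) ^ k • iteratedDeriv k (fun z => f (2 * x₀ + z)) (-t) := by
            rw [e1]; exact iteratedDeriv_comp_neg k (fun z => f (2 * x₀ + z)) t
        _ = (-1 : ℝ) ^ k * iteratedDeriv k f (2 * x₀ - t) := by
            rw [smul_eq_mul, congrFun (iteratedDeriv_comp_const_add k f (2 * x₀)) (-t)]
            norm_num [sub_eq_add_neg]
    have hgd : ∀ y ∈ Ioo (x₀ - δ) (x₀ + δ), |iteratedDeriv (n + 1) g y| ≤ D := by
      intro y hy
      rw [key, abs_mul, abs_pow, abs_neg, abs_one, one_pow, one_mul]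
      exact hd _ (hmap y hy)
    have hx' : 2 * x₀ - x ∈ Ioo (x₀ - δ) (x₀ + δ) := hmap x hx
    have hlt' : x₀ < 2 * x₀ - x := by linarith
    have h1 := myTaylor_right hδ hD hgC hgd hx' hlt'
    have e2 : g (2 * x₀ - x) = f x := by simp [hg_def]
    have e3 : ∀ k : ℕ, iteratedDeriv k g x₀ * (2 * x₀ - x - x₀) ^ k / (k.factorial : ℝ)
        = iteratedDeriv k f x₀ * (x - x₀) ^ k / (k.factorial : ℝ) := by
      intro k
      rw [key k x₀]
      have e4 : (2 * x₀ - x₀ : ℝ) = x₀ := by ring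
      rw [e4]
      have e5 : (-1 : ℝ) ^ k * (2 * x₀ - x - x₀) ^ k = (x - x₀) ^ k := by
        rw [← mul_pow]
        congr 1
        ring
      rw [mul_assoc, ← e5]
      ring
    have e6 : |2 * x₀ - x - x₀| = |x - x₀| := by
      rw [show (2 * x₀ - x - x₀ : ℝ) = -(x - x₀) by ring, abs_neg]
    rw [e2, Finset.sum_congr rfl (fun k _ => e3 k), e6] at h1
    exact h1

/-- Let `f̄ : ℝ → ℝ` be bounded by `C`, `m` times differentiable on
`(x₀ - δ, x₀ + δ)` with derivatives bounded by `D`, and let `K : ℝ → ℝ` satisfy `∫K = 1`,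
`∫ z^k K(z) dz = 0` for `1 ≤ k ≤ m`, and `∫ |z|^m |K(z)| dz < ∞`. Then for every `1 ≤ s ≤ m`
there is a constant `C'` (depending only on `C`, `D`, `δ`, `s` and `∫|z|^m|K(z)|dz`) such that
for all `h ∈ (0, δ]`, `|∫_ℝ f̄(x₀ + hv) K(v) dv − f̄(x₀)| ≤ C' h^s`. -/
theorem kernel_smoothing_bias_bound
    (f : ℝ → ℝ) (C D δ x₀ : ℝ) (hC : 0 < C) (hD : 0 < D) (hδ : 0 < δ)
    (m : ℕ) (hm : 1 ≤ m)
    (hfbdd : ∀ x : ℝ, |f x| ≤ C)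
    (hfmeas : Measurable f)
    (hfsmooth : ContDiffOn ℝ m f (Set.Ioo (x₀ - δ) (x₀ + δ)))
    (hfderiv : ∀ k : ℕ, k ≤ m → ∀ x ∈ Set.Ioo (x₀ - δ) (x₀ + δ),
      |iteratedDerivWithin k f (Set.Ioo (x₀ - δ) (x₀ + δ)) x| ≤ D)
    (K : ℝ → ℝ)
    (hKint : Integrable K) (hK1 : ∫ z : ℝ, K z = 1)
    (hKmom : ∀ k : ℕ, 1 ≤ k → k ≤ m →
      Integrable (fun z : ℝ => z ^ k * K z) ∧ (∫ z : ℝ, z ^ k * K z) = 0)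
    (hKabs : Integrable (fun z : ℝ => |z| ^ m * |K z|)) :
    ∀ s : ℕ, 1 ≤ s → s ≤ m → ∃ C' : ℝ, 0 < C' ∧
      ∀ h : ℝ, 0 < h → h ≤ δ →
        |(∫ v : ℝ, f (x₀ + h * v) * K v) - f x₀| ≤ C' * h ^ s := by
  intro s hs1 hs2
  have hd : ∀ k : ℕ, k ≤ m → ∀ x ∈ Set.Ioo (x₀ - δ) (x₀ + δ), |iteratedDeriv k f x| ≤ D := by
    intro k hk x hx
    rw [← myIteratedDerivWithin_of_isOpen k isOpen_Ioo hx]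
    exact hfderiv k hk x hx
  obtain ⟨n, rfl⟩ : ∃ n, m = n + 1 := ⟨m - 1, (Nat.succ_pred_eq_of_pos hm).symm⟩
  set I := ∫ z : ℝ, |z| ^ (n + 1) * |K z| with hI_def
  have hI0 : 0 ≤ I :=
    integral_nonneg fun z => mul_nonneg (pow_nonneg (abs_nonneg _) _) (abs_nonneg _)
  set E := (max 1 δ) ^ (n + 1) / δ ^ (n + 1) with hE_def
  have hmax1 : (1 : ℝ) ≤ max 1 δ := le_max_left 1 δ
  have hE0 : 0 ≤ E := by positivity
  set M := D + C / δ ^ (n + 1) + D * (n + 1) * E with hM_def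
  have hM0 : 0 < M := by positivity
  refine ⟨M * (I + 1) * (max 1 δ) ^ (n + 1), by positivity, ?_⟩
  intro h hh0 hhδ
  have hfs : ContDiffOn ℝ ((n : ℕ∞) + 1) f (Set.Ioo (x₀ - δ) (x₀ + δ)) := by
    exact_mod_cast hfsmooth
  have hTB : ∀ u : ℝ, |u| < δ →
      |f (x₀ + u) - ∑ k ∈ Finset.range (n + 1),
        iteratedDeriv k f x₀ * u ^ k / (k.factorial : ℝ)| ≤ D * |u| ^ (n + 1) := by
    intro u hu
    obtain ⟨hu1, hu2⟩ := abs_lt.mp hu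
    have hmem : x₀ + u ∈ Set.Ioo (x₀ - δ) (x₀ + δ) := by
      rw [Set.mem_Ioo]; constructor <;> linarith
    have := myTaylor_two_sided hδ hD.le hfs (fun y hy => hd (n + 1) le_rfl y hy) hmem
    simpa using this
  have hc : ∀ k, k ≤ n + 1 → |iteratedDeriv k f x₀| ≤ D := fun k hk =>
    hd k hk x₀ ⟨by linarith, by linarith⟩
  -- pointwise bound
  have hptwise : ∀ v : ℝ,
      |(f (x₀ + h * v) - ∑ k ∈ Finset.range (n + 1),
          iteratedDeriv k f x₀ * (h * v) ^ k / (k.factorial : ℝ)) * K v|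
        ≤ M * h ^ (n + 1) * (|v| ^ (n + 1) * |K v|) := by
    intro v
    rw [abs_mul]
    have habs : h ^ (n + 1) * |v| ^ (n + 1) = |h * v| ^ (n + 1) := by
      rw [abs_mul, abs_of_pos hh0, mul_pow]
    have key : |f (x₀ + h * v) - ∑ k ∈ Finset.range (n + 1),
        iteratedDeriv k f x₀ * (h * v) ^ k / (k.factorial : ℝ)| ≤ M * |h * v| ^ (n + 1) := by
      have hp : (0:ℝ) ≤ |h * v| ^ (n + 1) := pow_nonneg (abs_nonneg _) _
      rcases lt_or_ge |h * v| δ with hlt | hge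
      · refine (hTB _ hlt).trans ?_
        have hDM : D ≤ M := by
          rw [hM_def]
          have a1 : (0:ℝ) ≤ C / δ ^ (n+1) := by positivity
          have a2 : (0:ℝ) ≤ D * ((n:ℝ)+1) * E := by positivity
          linarith
        exact mul_le_mul_of_nonneg_right hDM hp
      · have hδpow : δ ^ (n + 1) ≤ |h * v| ^ (n + 1) := pow_le_pow_left₀ hδ.le hge _
        have h1 : |f (x₀ + h * v)| ≤ C / δ ^ (n + 1) * |h * v| ^ (n + 1) := by
          refine (hfbdd _).trans ?_
          rw [div_mul_eq_mul_div, le_div_iff₀ (by positivity)]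
          exact mul_le_mul_of_nonneg_left hδpow hC.le
        have hterm : ∀ k ∈ Finset.range (n + 1),
            |iteratedDeriv k f x₀ * (h * v) ^ k / (k.factorial : ℝ)|
            ≤ D * E * |h * v| ^ (n + 1) := by
          intro k hkmem
          have hk : k ≤ n := Nat.lt_succ_iff.mp (Finset.mem_range.mp hkmem)
          have f1 : (1:ℝ) ≤ (k.factorial : ℝ) := by exact_mod_cast k.factorial_pos
          have b1 : |iteratedDeriv k f x₀ * (h * v) ^ k / (k.factorial : ℝ)|
              ≤ D * |h * v| ^ k := by
            rw [abs_div, abs_mul, abs_pow, Nat.abs_cast]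
            have hnum : |iteratedDeriv k f x₀| * |h * v| ^ k ≤ D * |h * v| ^ k :=
              mul_le_mul_of_nonneg_right (hc k (by omega)) (pow_nonneg (abs_nonneg _) _)
            exact (div_le_self (by positivity) f1).trans hnum
          refine b1.trans ?_
          have hEk : |h * v| ^ k ≤ E * |h * v| ^ (n + 1) := by
            rw [hE_def, div_mul_eq_mul_div, le_div_iff₀ (by positivity)]
            have e1 : δ ^ (n + 1) = δ ^ k * δ ^ (n + 1 - k) := by
              rw [← pow_add]; congr 1; omega
            have a1 : δ ^ (n + 1 - k) ≤ |h * v| ^ (n + 1 - k) := pow_le_pow_left₀ hδ.le hge _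
            have a2 : δ ^ k ≤ (max 1 δ) ^ (n + 1) :=
              (pow_le_pow_left₀ hδ.le (le_max_right 1 δ) k).trans
                (pow_le_pow_right₀ hmax1 (by omega))
            calc |h * v| ^ k * δ ^ (n + 1)
                = δ ^ k * (|h * v| ^ k * δ ^ (n + 1 - k)) := by rw [e1]; ring
              _ ≤ (max 1 δ) ^ (n + 1) * (|h * v| ^ k * |h * v| ^ (n + 1 - k)) := by
                  refine mul_le_mul a2 (mul_le_mul_of_nonneg_left a1
                    (pow_nonneg (abs_nonneg _) _)) (by positivity) (by positivity)
              _ = (max 1 δ) ^ (n + 1) * |h * v| ^ (n + 1) := by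
                  rw [← pow_add]; congr 2; omega
          calc D * |h * v| ^ k ≤ D * (E * |h * v| ^ (n + 1)) :=
                mul_le_mul_of_nonneg_left hEk hD.le
            _ = D * E * |h * v| ^ (n + 1) := by ring
        have h2 : |∑ k ∈ Finset.range (n + 1),
            iteratedDeriv k f x₀ * (h * v) ^ k / (k.factorial : ℝ)|
            ≤ ((n:ℝ) + 1) * (D * E * |h * v| ^ (n + 1)) := by
          refine (Finset.abs_sum_le_sum_abs _ _).trans ?_
          refine (Finset.sum_le_sum hterm).trans ?_
          rw [Finset.sum_const, Finset.card_range, nsmul_eq_mul]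
          exact le_of_eq (by push_cast; ring)
        have h3 : |f (x₀ + h * v) - ∑ k ∈ Finset.range (n + 1),
            iteratedDeriv k f x₀ * (h * v) ^ k / (k.factorial : ℝ)|
            ≤ |f (x₀ + h * v)| + |∑ k ∈ Finset.range (n + 1),
              iteratedDeriv k f x₀ * (h * v) ^ k / (k.factorial : ℝ)| := by
          rw [sub_eq_add_neg]
          exact (abs_add_le _ _).trans (le_of_eq (by rw [abs_neg]))
        have hMX : M * |h * v| ^ (n + 1) = D * |h * v| ^ (n + 1)
            + C / δ ^ (n + 1) * |h * v| ^ (n + 1)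
            + ((n:ℝ) + 1) * (D * E * |h * v| ^ (n + 1)) := by
          rw [hM_def]; ring
        have hDp : 0 ≤ D * |h * v| ^ (n + 1) := mul_nonneg hD.le hp
        linarith
    calc |f (x₀ + h * v) - ∑ k ∈ Finset.range (n + 1),
          iteratedDeriv k f x₀ * (h * v) ^ k / (k.factorial : ℝ)| * |K v|
        ≤ (M * |h * v| ^ (n + 1)) * |K v| := mul_le_mul_of_nonneg_right key (abs_nonneg _)
      _ = M * h ^ (n + 1) * (|v| ^ (n + 1) * |K v|) := by rw [← habs]; ring
  -- integrability
  have hmeasf : AEStronglyMeasurable (fun v : ℝ => f (x₀ + h * v)) volume :=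
    (hfmeas.comp (measurable_const.add (measurable_id.const_mul h))).aestronglyMeasurable
  have intF : Integrable (fun v : ℝ => f (x₀ + h * v) * K v) :=
    hKint.bdd_mul (c := C) hmeasf (Filter.Eventually.of_forall fun v => by rw [Real.norm_eq_abs]; exact hfbdd _)
  have intTerm : ∀ k ∈ Finset.range (n + 1),
      Integrable (fun v : ℝ =>
        iteratedDeriv k f x₀ / (k.factorial : ℝ) * h ^ k * (v ^ k * K v)) := by
    intro k hkmem
    have hk' : k < n + 1 := Finset.mem_range.mp hkmem
    rcases Nat.eq_zero_or_pos k with rfl | hk0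
    · refine (hKint.const_mul (f x₀)).congr (Filter.Eventually.of_forall fun v => ?_)
      simp
    · exact ((hKmom k hk0 (by omega)).1.const_mul _)
  have sum_eq : ∀ v : ℝ,
      (∑ k ∈ Finset.range (n + 1),
        iteratedDeriv k f x₀ * (h * v) ^ k / (k.factorial : ℝ)) * K v
      = ∑ k ∈ Finset.range (n + 1),
        iteratedDeriv k f x₀ / (k.factorial : ℝ) * h ^ k * (v ^ k * K v) := by
    intro v
    rw [Finset.sum_mul]
    refine Finset.sum_congr rfl fun k _ => ?_
    rw [mul_pow]; ring
  have intSum : Integrable (fun v : ℝ => ∑ k ∈ Finset.range (n + 1),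
      iteratedDeriv k f x₀ / (k.factorial : ℝ) * h ^ k * (v ^ k * K v)) :=
    integrable_finset_sum _ intTerm
  have intP : Integrable (fun v : ℝ =>
      (∑ k ∈ Finset.range (n + 1),
        iteratedDeriv k f x₀ * (h * v) ^ k / (k.factorial : ℝ)) * K v) :=
    intSum.congr (Filter.Eventually.of_forall fun v => (sum_eq v).symm)
  have intVal : (∫ v : ℝ, (∑ k ∈ Finset.range (n + 1),
      iteratedDeriv k f x₀ * (h * v) ^ k / (k.factorial : ℝ)) * K v) = f x₀ := by
    rw [integral_congr_ae (Filter.Eventually.of_forall sum_eq),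
      integral_finset_sum _ intTerm]
    rw [Finset.sum_eq_single 0]
    · simp only [pow_zero, one_mul, Nat.factorial_zero, Nat.cast_one, div_one,
        iteratedDeriv_zero, mul_one]
      rw [MeasureTheory.integral_const_mul, hK1, mul_one]
    · intro k hkmem hk0
      have hk' : k < n + 1 := Finset.mem_range.mp hkmem
      rw [MeasureTheory.integral_const_mul, (hKmom k (Nat.one_le_iff_ne_zero.mpr hk0)
        (by omega)).2, mul_zero]
    · intro hmem
      exact absurd (Finset.mem_range.mpr (by omega)) hmem
  have split : (∫ v : ℝ, f (x₀ + h * v) * K v) - f x₀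
      = ∫ v : ℝ, (f (x₀ + h * v) - ∑ k ∈ Finset.range (n + 1),
          iteratedDeriv k f x₀ * (h * v) ^ k / (k.factorial : ℝ)) * K v := by
    rw [← intVal, ← integral_sub intF intP]
    congr 1
    funext v
    ring
  rw [split]
  have bound := norm_integral_le_of_norm_le (hKabs.const_mul (M * h ^ (n + 1)))
    (Filter.Eventually.of_forall fun v => by
      rw [Real.norm_eq_abs]
      calc |(f (x₀ + h * v) - ∑ k ∈ Finset.range (n + 1),
            iteratedDeriv k f x₀ * (h * v) ^ k / (k.factorial : ℝ)) * K v|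
          ≤ M * h ^ (n + 1) * (|v| ^ (n + 1) * |K v|) := hptwise v)
  rw [Real.norm_eq_abs] at bound
  refine bound.trans ?_
  rw [MeasureTheory.integral_const_mul]
  have hpow : h ^ (n + 1) ≤ h ^ s * (max 1 δ) ^ (n + 1) := by
    have e1 : h ^ (n + 1) = h ^ s * h ^ (n + 1 - s) := by
      rw [← pow_add]; congr 1; omega
    rw [e1]
    refine mul_le_mul_of_nonneg_left ?_ (pow_nonneg hh0.le s)
    calc h ^ (n + 1 - s) ≤ (max 1 δ) ^ (n + 1 - s) :=
          pow_le_pow_left₀ hh0.le (hhδ.trans (le_max_right 1 δ)) _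
      _ ≤ (max 1 δ) ^ (n + 1) := pow_le_pow_right₀ hmax1 (by omega)
  calc M * h ^ (n + 1) * I ≤ M * (h ^ s * (max 1 δ) ^ (n + 1)) * (I + 1) := by
        refine mul_le_mul (mul_le_mul_of_nonneg_left hpow hM0.le) (by linarith)
          hI0 (by positivity)
    _ = M * (I + 1) * (max 1 δ) ^ (n + 1) * h ^ s := by ring
end
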